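/- Let f : ℝ² → ℝ² equal f₁(x,y) = ((7/6)(x+1), 8(y+1)) on R₁ = [−5/2, 1/2] × [−5/4, −3/4] and f₂(x,y) = ((7/6)(x−1), 8(y−1)) on R₂ = [−1/2, 5/2] × [3/4, 5/4]. Let σ₀ : [−2,2] → (−2,2) be C¹ with |σ₀'| < 1/5. Then for each i ∈ {1,2} such that σ₀([−2,2]) ⊆ int [first-coordinate projection of Rᵢ], the image f(Γ(σ₀) ∩ Rᵢ) equals Γ(σ₁) for some C¹ function σ₁ : [−2,2] → (−2,2) with |σ₁'| < 1/5, where Γ(σ) = {(σ(t), t) : t ∈ [−2,2]}. -/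

import Mathlib

open Set

lemma aux7 (f : ℝ × ℝ → ℝ × ℝ) (ε : ℝ) (hε1 : -1 ≤ ε) (hε2 : ε ≤ 1)
    (hf : ∀ q ∈ Icc (ε - 3/2) (ε + 3/2) ×ˢ Icc (ε - 1/4) (ε + 1/4),
      f q = ((7/6) * (q.1 - ε), 8 * (q.2 - ε)))
    (σ₀ : ℝ → ℝ) (hσ : ContDiff ℝ 1 σ₀)
    (hd : ∀ t ∈ Icc (-2 : ℝ) 2, |deriv σ₀ t| < 1/5)
    (hcov : ∀ t ∈ Icc (-2 : ℝ) 2, σ₀ t ∈ Ioo (ε - 3/2) (ε + 3/2)) :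
    ∃ σ₁ : ℝ → ℝ, ContDiff ℝ 1 σ₁ ∧
      (∀ t ∈ Icc (-2 : ℝ) 2, σ₁ t ∈ Ioo (-2 : ℝ) 2 ∧ |deriv σ₁ t| < 1/5) ∧
      f '' ({q : ℝ × ℝ | ∃ t ∈ Icc (-2 : ℝ) 2, q = (σ₀ t, t)} ∩
        Icc (ε - 3/2) (ε + 3/2) ×ˢ Icc (ε - 1/4) (ε + 1/4)) =
      {q : ℝ × ℝ | ∃ t ∈ Icc (-2 : ℝ) 2, q = (σ₁ t, t)} := by
  have hder : ∀ s : ℝ, HasDerivAt (fun s => 7/6 * (σ₀ (s/8 + ε) - ε))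
      (7/6 * (deriv σ₀ (s/8 + ε) * (1/8))) s := by
    intro s
    have h1 : HasDerivAt (fun s : ℝ => s/8 + ε) (1/8) s := by
      simpa using ((hasDerivAt_id s).div_const 8).add_const ε
    have h2 : HasDerivAt σ₀ (deriv σ₀ (s/8 + ε)) (s/8 + ε) :=
      ((hσ.differentiable one_ne_zero) _).hasDerivAt
    exact ((h2.comp s h1).sub_const ε).const_mul _
  refine ⟨fun s => 7/6 * (σ₀ (s/8 + ε) - ε), ?_, ?_, ?_⟩
  · exact contDiff_const.mul
      ((hσ.comp ((contDiff_id.div_const 8).add contDiff_const)).sub contDiff_const)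
  · intro s hs
    obtain ⟨hs1, hs2⟩ := hs
    have ht : s/8 + ε ∈ Icc (-2 : ℝ) 2 := ⟨by linarith, by linarith⟩
    have hcv := hcov _ ht
    have hdt := hd _ ht
    refine ⟨⟨by nlinarith [hcv.1], by nlinarith [hcv.2]⟩, ?_⟩
    rw [(hder s).deriv, abs_mul, abs_mul]
    have h0 := abs_nonneg (deriv σ₀ (s/8 + ε))
    rw [abs_of_nonneg (by norm_num : (0:ℝ) ≤ 7/6), abs_of_nonneg (by norm_num : (0:ℝ) ≤ 1/8)]
    nlinarith
  · ext p
    simp only [mem_image, mem_inter_iff, mem_setOf_eq, mem_prod]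
    constructor
    · rintro ⟨q, ⟨⟨t, ht, rfl⟩, hx, hy⟩, rfl⟩
      simp only at hx hy
      refine ⟨8 * (t - ε), ⟨by linarith [hy.1], by linarith [hy.2]⟩, ?_⟩
      rw [hf (σ₀ t, t) ⟨hx, hy⟩]
      rw [show 8 * (t - ε) / 8 + ε = t by ring]
    · rintro ⟨s, hs, rfl⟩
      have ht : s/8 + ε ∈ Icc (-2 : ℝ) 2 := ⟨by linarith [hs.1], by linarith [hs.2]⟩
      have hcv := hcov _ ht
      have hmem2 : (σ₀ (s/8 + ε), s/8 + ε) ∈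
          Icc (ε - 3/2) (ε + 3/2) ×ˢ Icc (ε - 1/4) (ε + 1/4) :=
        ⟨⟨le_of_lt hcv.1, le_of_lt hcv.2⟩, ⟨by linarith [hs.1], by linarith [hs.2]⟩⟩
      refine ⟨(σ₀ (s/8 + ε), s/8 + ε), ⟨⟨_, ht, rfl⟩, hmem2.1, hmem2.2⟩, ?_⟩
      rw [hf _ hmem2, Prod.mk.injEq]
      constructor <;> ring

theorem stmt7 (f : ℝ × ℝ → ℝ × ℝ)
    (hf1 : ∀ q ∈ Icc (-(5 : ℝ)/2) (1/2) ×ˢ Icc (-(5 : ℝ)/4) (-(3 : ℝ)/4),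
      f q = ((7/6) * (q.1 + 1), 8 * (q.2 + 1)))
    (hf2 : ∀ q ∈ Icc (-(1 : ℝ)/2) (5/2) ×ˢ Icc ((3 : ℝ)/4) ((5 : ℝ)/4),
      f q = ((7/6) * (q.1 - 1), 8 * (q.2 - 1)))
    (σ₀ : ℝ → ℝ) (hσ : ContDiff ℝ 1 σ₀)
    (hmem : ∀ t ∈ Icc (-2 : ℝ) 2, σ₀ t ∈ Ioo (-2 : ℝ) 2)
    (hd : ∀ t ∈ Icc (-2 : ℝ) 2, |deriv σ₀ t| < 1/5)
    (i : Fin 2)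
    (hcov : ∀ t ∈ Icc (-2 : ℝ) 2,
      σ₀ t ∈ (if i = 0 then Ioo (-(5 : ℝ)/2) (1/2) else Ioo (-(1 : ℝ)/2) (5/2))) :
    ∃ σ₁ : ℝ → ℝ, ContDiff ℝ 1 σ₁ ∧
      (∀ t ∈ Icc (-2 : ℝ) 2, σ₁ t ∈ Ioo (-2 : ℝ) 2 ∧ |deriv σ₁ t| < 1/5) ∧
      f '' ({q : ℝ × ℝ | ∃ t ∈ Icc (-2 : ℝ) 2, q = (σ₀ t, t)} ∩
        (if i = 0 then Icc (-(5 : ℝ)/2) (1/2) ×ˢ Icc (-(5 : ℝ)/4) (-(3 : ℝ)/4)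
          else Icc (-(1 : ℝ)/2) (5/2) ×ˢ Icc ((3 : ℝ)/4) ((5 : ℝ)/4))) =
      {q : ℝ × ℝ | ∃ t ∈ Icc (-2 : ℝ) 2, q = (σ₁ t, t)} := by
  fin_cases i
  · simp only [if_pos rfl] at hcov ⊢
    simp only [show (-(5:ℝ)/2) = (-1 : ℝ) - 3/2 from by norm_num,
      show ((1:ℝ)/2) = (-1 : ℝ) + 3/2 from by norm_num,
      show (-(5:ℝ)/4) = (-1 : ℝ) - 1/4 from by norm_num,
      show (-(3:ℝ)/4) = (-1 : ℝ) + 1/4 from by norm_num] at hcov hf1 ⊢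
    refine aux7 f (-1) (by norm_num) (by norm_num) ?_ σ₀ hσ hd hcov
    intro q hq
    rw [hf1 q hq]
    norm_num
  · have hne : ¬((⟨1, by norm_num⟩ : Fin 2) = 0) := by decide
    simp only [if_neg hne] at hcov ⊢
    simp only [show (-(1:ℝ)/2) = (1 : ℝ) - 3/2 from by norm_num,
      show ((5:ℝ)/2) = (1 : ℝ) + 3/2 from by norm_num,
      show ((3:ℝ)/4) = (1 : ℝ) - 1/4 from by norm_num,
      show ((5:ℝ)/4) = (1 : ℝ) + 1/4 from by norm_num] at hcov hf2 ⊢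
    exact aux7 f 1 (by norm_num) (by norm_num) hf2 σ₀ hσ hd hcov
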